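/- Let w ≥ 2 and let μ(t) be the root of x^w − x^{w−1} − 2^{w−1} e^{it} = 0 with μ(0) = 2 (the analytic continuation of the dominant eigenvalue near t = 0). Then μ'(0) = 2i/(w+1), and consequently the first Taylor coefficient of log₂ μ(t) at t = 0 is i/((w+1) log 2); i.e., the expected density constant e = −i μ'(0)/(μ(0) log 2) · log 2 = 1/(w+1). -/

import Mathlib

open Complex

/-- Implicit differentiation of the dominant eigenvalue: if `μ(t)` satisfies
`μ(t)^w − μ(t)^(w−1) − 2^(w−1) e^{it} = 0` near `t = 0` with `μ(0) = 2` and is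
differentiable at `0`, then `μ'(0) = 2i/(w+1)`, and hence the first Taylor
coefficient of `log₂ μ(t)` at `0`, namely `μ'(0)/(μ(0)·log 2)`, equals
`i/((w+1)·log 2)`. -/
theorem dominant_eigenvalue_derivative (w : ℕ) (hw : 2 ≤ w)
    (μ : ℝ → ℂ) (hμ0 : μ 0 = 2)
    (heq : ∀ᶠ t in nhds (0 : ℝ),
      μ t ^ w - μ t ^ (w - 1) - 2 ^ (w - 1) * Complex.exp (t * I) = 0)
    (d : ℂ) (hder : HasDerivAt μ d 0) :
    d = 2 * I / ((w : ℂ) + 1) ∧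
    d / (μ 0 * Real.log 2) = I / (((w : ℂ) + 1) * Real.log 2) := by
  obtain ⟨k, rfl⟩ : ∃ k, w = k + 2 := ⟨w - 2, by omega⟩
  -- derivative of each piece
  have hpow1 : HasDerivAt (fun t => μ t ^ (k + 2))
      ((k + 2 : ℕ) * μ 0 ^ (k + 1) * d) 0 := by
    simpa [mul_assoc, Function.comp_def] using (hasDerivAt_pow (k + 2) (μ 0)).comp 0 hder
  have hpow2 : HasDerivAt (fun t => μ t ^ (k + 2 - 1))
      ((k + 1 : ℕ) * μ 0 ^ k * d) 0 := by
    simpa [mul_assoc, Function.comp_def] using (hasDerivAt_pow (k + 1) (μ 0)).comp 0 hder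
  have hexp : HasDerivAt (fun t : ℝ => (2 : ℂ) ^ (k + 2 - 1) * Complex.exp (t * I))
      ((2 : ℂ) ^ (k + 1) * I) 0 := by
    have h1 : HasDerivAt (fun t : ℝ => (t : ℂ) * I) I 0 := by
      simpa using (Complex.ofRealCLM.hasDerivAt (x := (0 : ℝ))).mul_const I
    simpa using (h1.cexp).const_mul ((2 : ℂ) ^ (k + 1))
  have hg : HasDerivAt
      (fun t => μ t ^ (k + 2) - μ t ^ (k + 2 - 1) - 2 ^ (k + 2 - 1) * Complex.exp (t * I))
      ((k + 2 : ℕ) * μ 0 ^ (k + 1) * d - (k + 1 : ℕ) * μ 0 ^ k * d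
        - (2 : ℂ) ^ (k + 1) * I) 0 :=
    (hpow1.sub hpow2).sub hexp
  have h0 : HasDerivAt
      (fun t => μ t ^ (k + 2) - μ t ^ (k + 2 - 1) - 2 ^ (k + 2 - 1) * Complex.exp (t * I))
      0 0 := (hasDerivAt_const (0 : ℝ) (0 : ℂ)).congr_of_eventuallyEq heq
  have key : (k + 2 : ℕ) * μ 0 ^ (k + 1) * d - (k + 1 : ℕ) * μ 0 ^ k * d
      - (2 : ℂ) ^ (k + 1) * I = 0 := hg.unique h0
  rw [hμ0] at key
  have h2k : (2 : ℂ) ^ k ≠ 0 := pow_ne_zero _ two_ne_zero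
  have hne : ((k : ℂ) + 2 + 1) ≠ 0 := by
    have h3 : ((k : ℂ) + 2 + 1) = ((k + 3 : ℕ) : ℂ) := by push_cast; ring
    rw [h3]
    exact Nat.cast_ne_zero.mpr (by omega)
  have hlog : ((Real.log 2 : ℝ) : ℂ) ≠ 0 :=
    Complex.ofReal_ne_zero.mpr (ne_of_gt (Real.log_pos one_lt_two))
  have hd : d = 2 * I / ((k : ℂ) + 2 + 1) := by
    field_simp
    have h1 : ((k : ℂ) + 3) * d * 2 ^ k = 2 * I * 2 ^ k := by
      push_cast at key ⊢
      ring_nf at key ⊢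
      linear_combination key
    have h2 := mul_right_cancel₀ h2k h1
    linear_combination h2
  constructor
  · rw [hd]
    push_cast
    ring_nf
  · rw [hμ0, hd]
    push_cast
    rw [div_div, show ((k : ℂ) + 2 + 1) * (2 * (Real.log 2 : ℝ)) =
      2 * (((k : ℂ) + 2 + 1) * (Real.log 2 : ℝ)) by ring,
      mul_div_mul_left _ _ (two_ne_zero)]
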